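/- Let Q be a complete binary tree and let I be a non-empty set of k consecutive leaves of Q (consecutive in the left-to-right order of the leaves). Then there exists a node r of Q such that every leaf descendant of r belongs to I and r has at least k/4 leaf descendants. -/

import Mathlib

/-- In a complete binary tree of height `h`, the leaves are `0, …, 2^h - 1` in
left-to-right order, a node is a pair `(d, j)` with depth `d ≤ h` and index
`j < 2^d`, and its leaf descendants are exactly the interval
`[j·2^(h-d), (j+1)·2^(h-d))`.  Given a non-empty interval `[lo, lo+k)` of
consecutive leaves, there is a node all of whose leaf descendants lie in the
interval and which has at least `k/4` leaf descendants. -/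
theorem stmt_3 (h lo k : ℕ) (hk : 1 ≤ k) (hbound : lo + k ≤ 2 ^ h) :
    ∃ d j : ℕ, d ≤ h ∧ j < 2 ^ d ∧
      lo ≤ j * 2 ^ (h - d) ∧ (j + 1) * 2 ^ (h - d) ≤ lo + k ∧
      (k : ℝ) / 4 ≤ ((2 ^ (h - d) : ℕ) : ℝ) := by
  rcases eq_or_lt_of_le hk with h1 | h2
  · -- k = 1 : take the leaf itself
    refine ⟨h, lo, le_refl h, ?_, ?_, ?_, ?_⟩
    · have : lo < 2 ^ h := by omega
      simpa using this
    · simp [Nat.sub_self]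
    · simp [Nat.sub_self]; omega
    · simp [Nat.sub_self]
      rw [div_le_iff₀ (by norm_num)]
      have : (k : ℝ) = 1 := by exact_mod_cast h1.symm
      rw [this]; norm_num
  · -- k ≥ 2
    set L := Nat.log 2 k with hL
    have hL1 : 1 ≤ L := Nat.le_log_of_pow_le (by norm_num) (by omega)
    set t := L - 1 with ht
    have htL : t + 1 = L := by omega
    set s := 2 ^ t with hs
    have hs0 : 0 < s := Nat.pow_pos (by norm_num)
    have hlow : 2 * s ≤ k := by
      have h' : 2 ^ L ≤ k := Nat.pow_log_le_self 2 (by omega)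
      have : 2 ^ L = 2 * s := by rw [hs, ← htL]; ring
      omega
    have hhigh : k < 4 * s := by
      have h' : k < 2 ^ (L + 1) := Nat.lt_pow_succ_log_self (by norm_num) k
      have : 2 ^ (L + 1) = 4 * s := by rw [hs, ← htL]; ring
      omega
    have hth : t < h := by
      have h1 : 2 ^ (t + 1) ≤ 2 ^ h := by
        have : 2 ^ (t + 1) = 2 * s := by rw [hs]; ring
        omega
      have := (Nat.pow_le_pow_iff_right (by norm_num : 1 < 2)).mp h1
      omega
    set d := h - t with hd
    have hht : h - d = t := by omega
    have h2h : 2 ^ h = 2 ^ d * s := by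
      rw [hs, ← pow_add]; congr 1; omega
    set q := lo / s with hq
    have hmodlt : lo % s < s := Nat.mod_lt lo hs0
    obtain ⟨r, hr, hrs⟩ : ∃ r, lo = s * q + r ∧ r < s :=
      ⟨lo % s, (Nat.div_add_mod lo s).symm, hmodlt⟩
    have hcancel : ∀ a b : ℕ, a * s ≤ b * s → a ≤ b := fun a b hab =>
      Nat.le_of_mul_le_mul_right hab hs0
    by_cases hr0 : r = 0
    · refine ⟨d, q, by omega, ?_, ?_, ?_, ?_⟩
      · -- q < 2^d
        have hcov : (q + 1) * s ≤ 2 ^ d * s := by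
          have : (q + 1) * s = lo + s := by rw [hr, hr0]; ring
          rw [this, h2h.symm]; omega
        have := hcancel _ _ hcov
        omega
      · rw [hht, ← hs]
        have : q * s = lo := by rw [hr, hr0]; ring
        omega
      · rw [hht, ← hs]
        have : (q + 1) * s = lo + s := by rw [hr, hr0]; ring
        omega
      · rw [hht, ← hs]
        rw [div_le_iff₀ (by norm_num)]
        have hk4 : (k : ℝ) < 4 * s := by exact_mod_cast hhigh
        push_cast
        linarith
    · refine ⟨d, q + 1, by omega, ?_, ?_, ?_, ?_⟩
      · have hcov : (q + 1 + 1) * s ≤ 2 ^ d * s := by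
          have he : (q + 1 + 1) * s = lo - r + 2 * s := by
            have : lo - r = s * q := by omega
            rw [this]; ring
          rw [he, ← h2h]; omega
        have := hcancel _ _ hcov
        omega
      · rw [hht, ← hs]
        have : (q + 1) * s = lo - r + s := by
          have : lo - r = s * q := by omega
          rw [this]; ring
        omega
      · rw [hht, ← hs]
        have : (q + 1 + 1) * s = lo - r + 2 * s := by
          have : lo - r = s * q := by omega
          rw [this]; ring
        omega
      · rw [hht, ← hs]
        rw [div_le_iff₀ (by norm_num)]
        have hk4 : (k : ℝ) < 4 * s := by exact_mod_cast hhigh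
        push_cast
        linarith
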